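/- Let λ₁,…,λ_s > 0 be further constant weight factors, let σ ≥ 1 and let p ≥ 1 be an integer. Let w_δ be the weight system (with the same G) for the 2s fields (α₁,…,α_s,δ₁,…,δ_s) assigning weight factor κ_j to α_j and λ_j to δ_j, and let w_σ be the weight system for the s fields (α₁,…,α_s) assigning weight factor κ_j + σλ_j to α_j. Let f(α₁,…,α_s) have symmetric coefficient system a with ‖f‖_{w_σ} < ∞, and let δf^{(≥p)}(α₁,…,α_s,δ₁,…,δ_s) be the part of δf(α₁,…,α_s,δ₁,…,δ_s) = f(α₁+δ₁,…,α_s+δ_s) − f(α₁,…,α_s) of degree at least p in (δ₁,…,δ_s); explicitly, δf^{(≥p)} has the symmetric coefficient system δa_p(x⃗₁,…,x⃗_s; y⃗₁,…,y⃗_s) = χ(n(y⃗₁)+⋯+n(y⃗_s) ≥ p) · a(x⃗₁∘y⃗₁,…,x⃗_s∘y⃗_s) · Π_{j=1}^s binom(n(x⃗_j)+n(y⃗_j), n(y⃗_j)). Then ‖δf^{(≥p)}‖_{w_δ} ≤ σ^{−p} ‖f‖_{w_σ}; in particular ‖δf‖_{w_δ} ≤ σ^{−1} ‖f‖_{w_σ}.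 -/

import Mathlib

open scoped BigOperators ENNReal Classical

namespace BFKT

noncomputable section

variable {X : Type*}

/-- Tuples of points of `X` with prescribed multi-length `n`. -/
abbrev Tup (X : Type*) {s : ℕ} (n : Fin s → ℕ) := (j : Fin s) → Fin (n j) → X

/-- Pass from a tuple to the associated family of lists. -/
def toLists {s : ℕ} {n : Fin s → ℕ} (v : Tup X n) : Fin s → List X :=
  fun j => List.ofFn (v j)

/-- The set of points of `X` occurring in one of the lists. -/
def supp [DecidableEq X] {s : ℕ} (l : Fin s → List X) : Finset X :=
  Finset.univ.biUnion fun j => (l j).toFinset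

/-- The weight system with tree-weight `G` and constant weight factors `κ`. -/
def wt [DecidableEq X] (G : Finset X → ℝ) {s : ℕ} (κ : Fin s → ℝ) (l : Fin s → List X) : ℝ :=
  (∏ j, κ j ^ (l j).length) * G (supp l)

/-- A coefficient system is symmetric if it is invariant under permutation of the
components of each of its list arguments. -/
def IsSymm {s : ℕ} (a : (Fin s → List X) → ℂ) : Prop :=
  ∀ (l : Fin s → List X) (j : Fin s) (l' : List X),
    (l j).Perm l' → a (Function.update l j l') = a l

/-- The norm `‖f‖_w` of an analytic function with (symmetric) coefficient system `a`. -/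
def coefNorm [Fintype X] [DecidableEq X] (G : Finset X → ℝ) {s : ℕ}
    (κ : Fin s → ℝ) (a : (Fin s → List X) → ℂ) : ℝ≥0∞ :=
  ENNReal.ofReal (‖a fun _ => []‖) +
  ∑' n : Fin s → ℕ,
    if 1 ≤ ∑ j, n j then
      ⨆ (x : X) (j : Fin s) (_ : n j ≠ 0) (i : Fin (n j)),
        ∑ v : Tup X n,
          if v j i = x then
            ENNReal.ofReal (‖a (toLists v)‖ * wt G κ (toLists v))
          else 0
    else 0

/-- `A` is an `s`-field map kernel: it vanishes on the empty tuple. -/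
def IsKernel {s : ℕ} (A : X → (Fin s → List X) → ℂ) : Prop :=
  ∀ x, A x (fun _ => []) = 0

/-- The `L` part of the field map kernel norm. -/
def kerL [Fintype X] [DecidableEq X] (G : Finset X → ℝ) {s : ℕ} (κ : Fin s → ℝ)
    (A : X → (Fin s → List X) → ℂ) (n : Fin s → ℕ) : ℝ≥0∞ :=
  ⨆ x : X, ∑ v : Tup X n,
    ENNReal.ofReal (‖A x (toLists v)‖ * (∏ j, κ j ^ n j)
      * G (insert x (supp (toLists v))))

/-- The `R` part of the field map kernel norm. -/
def kerR [Fintype X] [DecidableEq X] (G : Finset X → ℝ) {s : ℕ} (κ : Fin s → ℝ)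
    (A : X → (Fin s → List X) → ℂ) (n : Fin s → ℕ) : ℝ≥0∞ :=
  ⨆ (x' : X) (j : Fin s) (_ : n j ≠ 0) (i : Fin (n j)),
    ∑ x : X, ∑ v : Tup X n,
      if v j i = x' then
        ENNReal.ofReal (‖A x (toLists v)‖ * (∏ j', κ j' ^ n j')
          * G (insert x (supp (toLists v))))
      else 0

/-- The norm `⦀A⦀_w` of an `s`-field map kernel. -/
def kerNorm [Fintype X] [DecidableEq X] (G : Finset X → ℝ) {s : ℕ} (κ : Fin s → ℝ)
    (A : X → (Fin s → List X) → ℂ) : ℝ≥0∞ :=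
  ∑' n : Fin s → ℕ, if 1 ≤ ∑ j, n j then max (kerL G κ A n) (kerR G κ A n) else 0

/-- The field obtained by applying the field map with kernel `A` to the fields `α`. -/
def fmApply [Fintype X] {s : ℕ} (A : X → (Fin s → List X) → ℂ)
    (α : Fin s → X → ℂ) (x : X) : ℂ :=
  ∑' p : Σ n : Fin s → ℕ, Tup X n, A x (toLists p.2) * ∏ j, ∏ i, α j (p.2 j i)

/-- The value of the analytic function with coefficient system `a` at the fields `α`. -/
def fnApply [Fintype X] {s : ℕ} (a : (Fin s → List X) → ℂ)
    (α : Fin s → X → ℂ) : ℂ :=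
  ∑' p : Σ n : Fin s → ℕ, Tup X n, a (toLists p.2) * ∏ j, ∏ i, α j (p.2 j i)

/-- The `L^p` norm (for `0 < p ≤ ∞`) of a field on the finite set `X`. -/
def lpNorm [Fintype X] (p : ℝ≥0∞) (α : X → ℂ) : ℝ :=
  if p = ∞ then ⨆ x, ‖α x‖
  else (∑ x, ‖α x‖ ^ p.toReal) ^ (1 / p.toReal)

/-- Symmetrization of a coefficient system. -/
def symmetrize {s : ℕ} (a : (Fin s → List X) → ℂ) : (Fin s → List X) → ℂ :=
  fun l =>
    (((∏ j, Nat.factorial (l j).length : ℕ) : ℂ))⁻¹ *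
      ∑ e : (j : Fin s) → Equiv.Perm (Fin (l j).length),
        a fun j => List.ofFn fun i => (l j).get (e j i)

/-- Ordered concatenation of the pieces `q (j,k)`, in lexicographic order of `(j,k)`. -/
def concatPieces {r : ℕ} (m : Fin r → ℕ) (q : (Σ j : Fin r, Fin (m j)) → List X) : List X :=
  ((List.finRange r).map fun j => (List.ofFn fun k : Fin (m j) => q ⟨j, k⟩).flatten).flatten

/-- The coefficient system obtained by formally substituting the field map kernels `A j`
into the coefficient system `a` of a function of `r` fields. -/
def substCoef [Fintype X] {r s : ℕ} (a : (Fin r → List X) → ℂ)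
    (A : Fin r → X → (Fin s → List X) → ℂ) : (Fin s → List X) → ℂ :=
  fun l =>
    ∑' m : Fin r → ℕ,
      ∑ y : Tup X m,
        a (toLists y) *
          ∑' q : (i : Fin s) → (Σ j : Fin r, Fin (m j)) → List X,
            if ∀ i, concatPieces m (q i) = l i then
              ∏ j, ∏ k, A j (y j k) (fun i => q i ⟨j, k⟩)
            else 0

/-- The kernel obtained by formally substituting the field map kernels `A j`
into the `r`-field map kernel `B`. -/
def substKer [Fintype X] {r s : ℕ} (B : X → (Fin r → List X) → ℂ)
    (A : Fin r → X → (Fin s → List X) → ℂ) : X → (Fin s → List X) → ℂ :=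
  fun x l => substCoef (B x) A l

/-- Total length of the last `r` list arguments of an `(s+r)`-field map kernel argument. -/
def lastLen {X : Type*} {s r : ℕ} (l : Fin (s + r) → List X) : ℕ :=
  ∑ j : Fin r, (l (Fin.natAdd s j)).length

/-- `B` has minimum degree at least `d` in its last `r` arguments. -/
def MinDeg {s r : ℕ} (B : X → (Fin (s + r) → List X) → ℂ) (d : ℕ) : Prop :=
  ∀ x l, lastLen (s := s) (r := r) l < d → B x l = 0

/-- `B` has maximum degree at most `d` in its last `r` arguments. -/
def MaxDeg {s r : ℕ} (B : X → (Fin (s + r) → List X) → ℂ) (d : ℕ) : Prop :=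
  ∀ x l, d < lastLen (s := s) (r := r) l → B x l = 0

/-- The restriction `B_{n_{s+1},…,n_{s+r}}`. -/
def restrictDeg {s r : ℕ} (B : X → (Fin (s + r) → List X) → ℂ) (n : Fin r → ℕ) :
    X → (Fin (s + r) → List X) → ℂ :=
  fun x l => if ∀ j, (l (Fin.natAdd s j)).length = n j then B x l else 0

/-- The primed norm `⦀B⦀'_{w_{κ,λ}}`. -/
def kerNorm' [Fintype X] [DecidableEq X] (G : Finset X → ℝ) {s r : ℕ}
    (kl : Fin (s + r) → ℝ) (B : X → (Fin (s + r) → List X) → ℂ) : ℝ≥0∞ :=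
  ∑' n : Fin r → ℕ, (∑ j, n j : ℕ) * kerNorm G kl (restrictDeg B n)

/-- The norm of an `r`-tuple of `s`-field maps, as element of the Banach space `𝓑`. -/
def tupleNorm [Fintype X] [DecidableEq X] (G : Finset X → ℝ) {s r : ℕ}
    (κ : Fin s → ℝ) (lam : Fin r → ℝ)
    (Γ : Fin r → X → (Fin s → List X) → ℂ) : ℝ≥0∞ :=
  ⨆ j, kerNorm G κ (Γ j) / ENNReal.ofReal (lam j)

/-- The kernel of the coordinate field map `(α₁,…,α_s) ↦ α_i`. -/
def projKer [DecidableEq X] {s : ℕ} (i : Fin s) : X → (Fin s → List X) → ℂ :=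
  fun x l => if l = Function.update (fun _ => ([] : List X)) i [x] then 1 else 0

/-- The family of maps substituted into an `(s+r)`-field map when composing with
an `r`-tuple `Γ` of `s`-field maps: the first `s` arguments are left alone. -/
def extendMaps [DecidableEq X] {s r : ℕ}
    (Γ : Fin r → X → (Fin s → List X) → ℂ) :
    Fin (s + r) → X → (Fin s → List X) → ℂ :=
  Fin.addCases (fun i => projKer i) Γ

/-- The kernel of the `s`-field map `B̃(Γ⃗)(α⃗) = B(α⃗, Γ⃗(α⃗))`. -/
def tildeKer [Fintype X] [DecidableEq X] {s r : ℕ}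
    (B : X → (Fin (s + r) → List X) → ℂ)
    (Γ : Fin r → X → (Fin s → List X) → ℂ) : X → (Fin s → List X) → ℂ :=
  substKer B (extendMaps Γ)

end

/-- The symmetric coefficient system of the part `δf^{(≥p)}` of
`f(α₁+δ₁,…,α_s+δ_s) − f(α₁,…,α_s)` of degree at least `p` in `(δ₁,…,δ_s)`:
the first `s` slots are the `α`-arguments, the last `s` slots the `δ`-arguments. -/
def deltaCoef {X : Type*} {s : ℕ} (p : ℕ) (a : (Fin s → List X) → ℂ) :
    (Fin (s + s) → List X) → ℂ :=
  fun l =>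
    if p ≤ ∑ j : Fin s, (l (Fin.natAdd s j)).length then
      a (fun j => l (Fin.castAdd s j) ++ l (Fin.natAdd s j)) *
        ∏ j : Fin s,
          (Nat.choose ((l (Fin.castAdd s j)).length + (l (Fin.natAdd s j)).length)
            ((l (Fin.natAdd s j)).length) : ℂ)
    else 0


section Statement3Aux

variable {X : Type*} [Fintype X] [DecidableEq X] {s : ℕ}

private def mA (n : Fin (s + s) → ℕ) : Fin s → ℕ := fun j => n (Fin.castAdd s j)

private def mD (n : Fin (s + s) → ℕ) : Fin s → ℕ := fun j => n (Fin.natAdd s j)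

private def Nof (n : Fin (s + s) → ℕ) : Fin s → ℕ := fun j => mA n j + mD n j

private def merge {n : Fin (s + s) → ℕ} (v : Tup X n) : Tup X (Nof n) :=
  fun j => Fin.append (v (Fin.castAdd s j)) (v (Fin.natAdd s j))

private def split {n : Fin (s + s) → ℕ} (u : Tup X (Nof n)) : Tup X n :=
  Fin.addCases (motive := fun J => Fin (n J) → X)
    (fun j i => u j (Fin.castAdd (mD n j) i)) (fun j i => u j (Fin.natAdd (mA n j) i))

private lemma merge_split {n : Fin (s + s) → ℕ} (u : Tup X (Nof n)) :
    merge (split u) = u := by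
  funext j
  show Fin.append (split u (Fin.castAdd s j)) (split u (Fin.natAdd s j)) = u j
  simp only [split, Fin.addCases_left, Fin.addCases_right]
  funext i
  refine Fin.addCases (motive := fun i => Fin.append
      (fun i => u j (Fin.castAdd (mD n j) i)) (fun i => u j (Fin.natAdd (mA n j) i)) i = u j i)
    (fun i => ?_) (fun i => ?_) i
  · simp [Fin.append_left]
  · simp [Fin.append_right]

private lemma split_merge {n : Fin (s + s) → ℕ} (v : Tup X n) :
    split (merge v) = v := by
  funext J
  refine Fin.addCases (motive := fun J => split (merge v) J = v J) (fun j => ?_) (fun j => ?_) J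
  · simp only [split, Fin.addCases_left]
    funext i
    exact Fin.append_left _ _ i
  · simp only [split, Fin.addCases_right]
    funext i
    exact Fin.append_right _ _ i

private lemma merge_bijective {n : Fin (s + s) → ℕ} :
    Function.Bijective (merge (X := X) (n := n)) :=
  ⟨Function.LeftInverse.injective split_merge, fun u => ⟨split u, merge_split u⟩⟩

private lemma toLists_merge {n : Fin (s + s) → ℕ} (v : Tup X n) (j : Fin s) :
    toLists (merge v) j = toLists v (Fin.castAdd s j) ++ toLists v (Fin.natAdd s j) := by
  simp only [toLists, merge]
  exact List.ofFn_fin_append _ _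

private lemma supp_merge {n : Fin (s + s) → ℕ} (v : Tup X n) :
    supp (toLists (merge v)) = supp (toLists v) := by
  ext x
  simp only [supp, Finset.mem_biUnion, Finset.mem_univ, true_and, List.mem_toFinset,
    toLists_merge, List.mem_append]
  constructor
  · rintro ⟨j, h | h⟩
    exacts [⟨_, h⟩, ⟨_, h⟩]
  · rintro ⟨J, h⟩
    refine Fin.addCases (motive := fun J => x ∈ toLists v J →
        ∃ j, x ∈ toLists v (Fin.castAdd s j) ∨ x ∈ toLists v (Fin.natAdd s j))
      (fun j h => ⟨j, Or.inl h⟩) (fun j h => ⟨j, Or.inr h⟩) J h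

private noncomputable def SupS (G : Finset X → ℝ) (a : (Fin s → List X) → ℂ) (N : Fin s → ℕ) : ℝ≥0∞ :=
  ⨆ (x : X) (j : Fin s) (_ : N j ≠ 0) (i : Fin (N j)),
    ∑ u : Tup X N, if u j i = x then
      ENNReal.ofReal (‖a (toLists u)‖ * G (supp (toLists u))) else 0

private lemma coefNorm_eq (G : Finset X → ℝ) (κσ : Fin s → ℝ) (hκσ : ∀ j, 0 ≤ κσ j)
    (a : (Fin s → List X) → ℂ) :
    coefNorm G κσ a = ENNReal.ofReal (‖a fun _ => []‖) +
      ∑' N : Fin s → ℕ, (if 1 ≤ ∑ j, N j then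
        ENNReal.ofReal (∏ j, κσ j ^ N j) * SupS G a N else 0) := by
  simp only [coefNorm]
  congr 1
  refine tsum_congr fun N => ?_
  by_cases h1 : 1 ≤ ∑ j, N j
  · rw [if_pos h1, if_pos h1]
    simp only [SupS, ENNReal.mul_iSup, Finset.mul_sum]
    refine iSup_congr fun x => iSup_congr fun j => iSup_congr fun hj => iSup_congr fun i =>
      Finset.sum_congr rfl fun u _ => ?_
    have hwt : wt G κσ (toLists u) = (∏ j', κσ j' ^ N j') * G (supp (toLists u)) := by
      simp [wt, toLists]
    split_ifs with h
    · rw [hwt, ← ENNReal.ofReal_mul (Finset.prod_nonneg fun j' _ => pow_nonneg (hκσ j') _)]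
      congr 1
      ring
    · simp
  · rw [if_neg h1, if_neg h1]

private lemma pinned_sum_eq (G : Finset X → ℝ) (b : (Fin s → List X) → ℂ)
    {n : Fin (s + s) → ℕ} (x : X) (J : Fin (s + s)) (i : Fin (n J))
    (j : Fin s) (i' : Fin (Nof n j)) (hpin : ∀ v : Tup X n, merge v j i' = v J i) :
    (∑ v : Tup X n, if v J i = x then
        ENNReal.ofReal (‖b fun j' => toLists v (Fin.castAdd s j') ++ toLists v (Fin.natAdd s j')‖ *
          G (supp (toLists v))) else 0)
      = ∑ u : Tup X (Nof n), if u j i' = x then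
          ENNReal.ofReal (‖b (toLists u)‖ * G (supp (toLists u))) else 0 := by
  refine Fintype.sum_bijective merge merge_bijective _ _ fun v => ?_
  rw [hpin v]
  have h1 : toLists (merge v) = fun j' => toLists v (Fin.castAdd s j') ++
      toLists v (Fin.natAdd s j') := funext (toLists_merge v)
  rw [supp_merge, h1]

private lemma tsum_choose (N : Fin s → ℕ) (xk yl : Fin s → ℝ)
    (hx : ∀ j, 0 ≤ xk j) (hy : ∀ j, 0 ≤ yl j) :
    ∑' k : Fin s → ℕ,
        ENNReal.ofReal (∏ j, ((N j).choose (k j) : ℝ) * xk j ^ (N j - k j) * yl j ^ (k j))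
      = ENNReal.ofReal (∏ j, (xk j + yl j) ^ N j) := by
  rw [tsum_eq_sum (s := Fintype.piFinset fun j => Finset.range (N j + 1)) ?_]
  · rw [← ENNReal.ofReal_sum_of_nonneg ?_]
    · congr 1
      have hps := Finset.prod_univ_sum (t := fun j => Finset.range (N j + 1))
        (f := fun j k => ((N j).choose k : ℝ) * xk j ^ (N j - k) * yl j ^ k)
      rw [← hps]
      refine Finset.prod_congr rfl fun j _ => ?_
      rw [add_comm (xk j), add_pow]
      exact Finset.sum_congr rfl fun k _ => by ring
    · intro k _
      refine Finset.prod_nonneg fun j _ => ?_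
      exact mul_nonneg (mul_nonneg (Nat.cast_nonneg _) (pow_nonneg (hx j) _))
        (pow_nonneg (hy j) _)
  · intro k hk
    rw [Fintype.mem_piFinset] at hk
    push_neg at hk
    obtain ⟨j, hj⟩ := hk
    rw [Finset.mem_range] at hj
    push_neg at hj
    have : (N j).choose (k j) = 0 := Nat.choose_eq_zero_of_lt (by omega)
    rw [Finset.prod_eq_zero (Finset.mem_univ j) (by rw [this]; simp), ENNReal.ofReal_zero]

end Statement3Aux

/-- Lemma III.6(a): `‖δf^{(≥p)}‖_{w_δ} ≤ σ^{−p} ‖f‖_{w_σ}`. -/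
theorem statement3 {X : Type*} [Fintype X] [DecidableEq X] [Nonempty X] {s : ℕ}
    (G : Finset X → ℝ)
    (hG1 : ∀ S : Finset X, 1 ≤ G S)
    (hGsing : ∀ S : Finset X, S.card ≤ 1 → G S = 1)
    (hGmono : ∀ S T : Finset X, S ⊆ T → G S ≤ G T)
    (hGmul : ∀ S T : Finset X, (S ∩ T).Nonempty → G (S ∪ T) ≤ G S * G T)
    (κ lam : Fin s → ℝ) (hκ : ∀ j, 0 < κ j) (hlam : ∀ j, 0 < lam j)
    (σ : ℝ) (hσ : 1 ≤ σ) (p : ℕ) (hp : 1 ≤ p)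
    (a : (Fin s → List X) → ℂ) (ha : IsSymm a)
    (hfin : coefNorm G (fun j => κ j + σ * lam j) a < ⊤) :
    coefNorm G (Fin.append κ lam) (deltaCoef p a)
      ≤ ENNReal.ofReal ((σ ^ p)⁻¹) * coefNorm G (fun j => κ j + σ * lam j) a := by
  classical
  have hσ0 : (0:ℝ) < σ := lt_of_lt_of_le zero_lt_one hσ
  have hσp : (0:ℝ) < σ ^ p := pow_pos hσ0 p
  have hinv : (0:ℝ) ≤ (σ ^ p)⁻¹ := inv_nonneg.mpr hσp.le
  have hκσ0 : ∀ j, 0 ≤ κ j + σ * lam j := fun j =>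
    add_nonneg (hκ j).le (mul_nonneg hσ0.le (hlam j).le)
  have h0 : deltaCoef p a (fun _ => ([] : List X)) = 0 := by
    simp only [deltaCoef, List.length_nil, Finset.sum_const_zero]
    rw [if_neg (by omega)]
  have hι : Function.Injective
      (fun n : Fin (s + s) → ℕ => ((Nof n, mD n) : (Fin s → ℕ) × (Fin s → ℕ))) := by
    intro n n' h
    have h1 : Nof n = Nof n' := congrArg Prod.fst h
    have h2 : mD n = mD n' := congrArg Prod.snd h
    have hA : ∀ j, mA n j = mA n' j := fun j => by
      have e1 := congrFun h1 j
      have e2 := congrFun h2 j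
      simp only [Nof] at e1
      omega
    funext J
    refine Fin.addCases (motive := fun J => n J = n' J)
      (fun j => hA j) (fun j => congrFun h2 j) J
  have key : ∀ n : Fin (s + s) → ℕ,
      (if 1 ≤ ∑ J, n J then
        ⨆ (x : X) (J : Fin (s + s)) (_ : n J ≠ 0) (i : Fin (n J)),
          ∑ v : Tup X n, if v J i = x then
            ENNReal.ofReal (‖deltaCoef p a (toLists v)‖ *
              wt G (Fin.append κ lam) (toLists v)) else 0
      else 0)
      ≤ ENNReal.ofReal ((σ ^ p)⁻¹) *
        (ENNReal.ofReal (∏ j, ((Nof n j).choose (mD n j) : ℝ) *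
            κ j ^ (Nof n j - mD n j) * (σ * lam j) ^ (mD n j)) *
          (if 1 ≤ ∑ j, Nof n j then SupS G a (Nof n) else 0)) := by
    intro n
    by_cases hp' : p ≤ ∑ j, mD n j
    · have hsum2 : ∑ J, n J = ∑ j, mA n j + ∑ j, mD n j := Fin.sum_univ_add (f := n)
      have hsumN : ∑ j, Nof n j = ∑ j, mA n j + ∑ j, mD n j := Finset.sum_add_distrib
      have h1 : 1 ≤ ∑ J, n J := by omega
      have h1N : 1 ≤ ∑ j, Nof n j := by omega
      have hsub : ∀ j, Nof n j - mD n j = mA n j := fun j => Nat.add_sub_cancel ..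
      rw [if_pos h1, if_pos h1N]
      simp only [hsub]
      set c : ℝ := ∏ j, ((Nof n j).choose (mD n j) : ℝ) * κ j ^ mA n j *
        (σ * lam j) ^ mD n j with hc
      set d : ℝ := ∏ j, ((Nof n j).choose (mD n j) : ℝ) * κ j ^ mA n j *
        lam j ^ mD n j with hd
      have hd0 : (0:ℝ) ≤ d := by
        rw [hd]
        exact Finset.prod_nonneg fun j _ =>
          mul_nonneg (mul_nonneg (Nat.cast_nonneg _) (pow_nonneg (hκ j).le _))
            (pow_nonneg (hlam j).le _)
      have hcd : c = σ ^ (∑ j, mD n j) * d := by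
        rw [hc, hd, ← Finset.prod_pow_eq_pow_sum, ← Finset.prod_mul_distrib]
        exact Finset.prod_congr rfl fun j _ => by rw [mul_pow]; ring
      have hdc : d ≤ (σ ^ p)⁻¹ * c := by
        have h2 : σ ^ p ≤ σ ^ (∑ j, mD n j) := pow_le_pow_right₀ hσ hp'
        calc d = ((σ ^ p)⁻¹ * σ ^ p) * d := by rw [inv_mul_cancel₀ hσp.ne']; ring
          _ ≤ (σ ^ p)⁻¹ * (σ ^ (∑ j, mD n j) * d) := by
              rw [mul_assoc]
              exact mul_le_mul_of_nonneg_left (mul_le_mul_of_nonneg_right h2 hd0) hinv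
          _ = (σ ^ p)⁻¹ * c := by rw [hcd]
      have hsummand : ∀ v : Tup X n,
          ‖deltaCoef p a (toLists v)‖ * wt G (Fin.append κ lam) (toLists v)
            = d * (‖a fun j => toLists v (Fin.castAdd s j) ++
                toLists v (Fin.natAdd s j)‖ * G (supp (toLists v))) := by
        intro v
        have hlen : ∀ J, (toLists v J).length = n J := fun J => by simp [toLists]
        have habs : deltaCoef p a (toLists v) =
            a (fun j => toLists v (Fin.castAdd s j) ++ toLists v (Fin.natAdd s j)) *
              ∏ j, ((Nof n j).choose (mD n j) : ℂ) := by
          simp only [deltaCoef, hlen]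
          rw [if_pos (show p ≤ ∑ j : Fin s, n (Fin.natAdd s j) from hp')]
          rfl
        have habs2 : ‖∏ j, ((Nof n j).choose (mD n j) : ℂ)‖
            = ∏ j, ((Nof n j).choose (mD n j) : ℝ) := by
          rw [← Nat.cast_prod, Complex.norm_natCast, Nat.cast_prod]
        have hwt : wt G (Fin.append κ lam) (toLists v)
            = ((∏ j, κ j ^ mA n j) * ∏ j, lam j ^ mD n j) * G (supp (toLists v)) := by
          have hprod : (∏ J : Fin (s + s), Fin.append κ lam J ^ n J)
              = (∏ j, κ j ^ mA n j) * ∏ j, lam j ^ mD n j := by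
            rw [Fin.prod_univ_add (f := fun J => Fin.append κ lam J ^ n J)]
            congr 1
            · exact Finset.prod_congr rfl fun j _ => by rw [Fin.append_left]; rfl
            · exact Finset.prod_congr rfl fun j _ => by rw [Fin.append_right]; rfl
          simp only [wt, hlen]
          rw [hprod]
        rw [habs, norm_mul, habs2, hwt, hd, Finset.prod_mul_distrib,
          Finset.prod_mul_distrib]
        ring
      refine iSup_le fun x => iSup_le fun J => iSup_le fun hJ => iSup_le fun i => ?_
      have main : ∀ (j : Fin s) (i' : Fin (Nof n j)) (J : Fin (s + s)) (i : Fin (n J)),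
          (∀ v : Tup X n, merge v j i' = v J i) →
          (∑ v : Tup X n, if v J i = x then
              ENNReal.ofReal (‖deltaCoef p a (toLists v)‖ *
                wt G (Fin.append κ lam) (toLists v)) else 0)
            ≤ ENNReal.ofReal ((σ ^ p)⁻¹) * (ENNReal.ofReal c * SupS G a (Nof n)) := by
        intro j i' J i hpin
        calc (∑ v : Tup X n, if v J i = x then
              ENNReal.ofReal (‖deltaCoef p a (toLists v)‖ *
                wt G (Fin.append κ lam) (toLists v)) else 0)
            = ∑ v : Tup X n, ENNReal.ofReal d * (if v J i = x then
                ENNReal.ofReal (‖a fun j' => toLists v (Fin.castAdd s j') ++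
                  toLists v (Fin.natAdd s j')‖ * G (supp (toLists v))) else 0) := by
              refine Finset.sum_congr rfl fun v _ => ?_
              split_ifs with h
              · rw [hsummand v, ENNReal.ofReal_mul hd0]
              · rw [mul_zero]
          _ = ENNReal.ofReal d * ∑ v : Tup X n, (if v J i = x then
                ENNReal.ofReal (‖a fun j' => toLists v (Fin.castAdd s j') ++
                  toLists v (Fin.natAdd s j')‖ * G (supp (toLists v))) else 0) := by
              rw [← Finset.mul_sum]
          _ = ENNReal.ofReal d * ∑ u : Tup X (Nof n), (if u j i' = x then
                ENNReal.ofReal (‖a (toLists u)‖ * G (supp (toLists u)))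
              else 0) := by
              rw [pinned_sum_eq G a x J i j i' hpin]
          _ ≤ ENNReal.ofReal ((σ ^ p)⁻¹ * c) * SupS G a (Nof n) := by
              refine mul_le_mul' (ENNReal.ofReal_le_ofReal hdc) ?_
              simp only [SupS]
              exact le_iSup_of_le x (le_iSup_of_le j (le_iSup_of_le (i'.pos.ne')
                (le_iSup_of_le i' le_rfl)))
          _ = ENNReal.ofReal ((σ ^ p)⁻¹) * (ENNReal.ofReal c * SupS G a (Nof n)) := by
              rw [ENNReal.ofReal_mul hinv, mul_assoc]
      obtain ⟨y, rfl⟩ : ∃ y : Fin s ⊕ Fin s, finSumFinEquiv y = J :=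
        ⟨finSumFinEquiv.symm J, finSumFinEquiv.apply_symm_apply J⟩
      cases y with
      | inl j => exact main j (Fin.castAdd (mD n j) i) _ i (fun v => Fin.append_left _ _ i)
      | inr j => exact main j (Fin.natAdd (mA n j) i) _ i (fun v => Fin.append_right _ _ i)
    · refine le_trans ?_ zero_le
      split_ifs with h1
      · refine iSup_le fun x => iSup_le fun J => iSup_le fun hJ => iSup_le fun i =>
          le_of_eq (Finset.sum_eq_zero fun v _ => ?_)
        have hz : deltaCoef p a (toLists v) = 0 := by
          simp only [deltaCoef, toLists, List.length_ofFn]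
          rw [if_neg (show ¬ p ≤ ∑ j : Fin s, n (Fin.natAdd s j) from hp')]
        simp [hz]
      · exact le_rfl
  calc coefNorm G (Fin.append κ lam) (deltaCoef p a)
      = ∑' n : Fin (s + s) → ℕ, (if 1 ≤ ∑ J, n J then
          ⨆ (x : X) (J : Fin (s + s)) (_ : n J ≠ 0) (i : Fin (n J)),
            ∑ v : Tup X n, if v J i = x then
              ENNReal.ofReal (‖deltaCoef p a (toLists v)‖ *
                wt G (Fin.append κ lam) (toLists v)) else 0
        else 0) := by
        simp only [coefNorm, h0, norm_zero, ENNReal.ofReal_zero, zero_add]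
    _ ≤ ∑' n : Fin (s + s) → ℕ, ENNReal.ofReal ((σ ^ p)⁻¹) *
          (ENNReal.ofReal (∏ j, ((Nof n j).choose (mD n j) : ℝ) *
              κ j ^ (Nof n j - mD n j) * (σ * lam j) ^ (mD n j)) *
            (if 1 ≤ ∑ j, Nof n j then SupS G a (Nof n) else 0)) :=
        ENNReal.tsum_le_tsum key
    _ = ENNReal.ofReal ((σ ^ p)⁻¹) * ∑' n : Fin (s + s) → ℕ,
          (ENNReal.ofReal (∏ j, ((Nof n j).choose (mD n j) : ℝ) *
              κ j ^ (Nof n j - mD n j) * (σ * lam j) ^ (mD n j)) *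
            (if 1 ≤ ∑ j, Nof n j then SupS G a (Nof n) else 0)) :=
        ENNReal.tsum_mul_left
    _ ≤ ENNReal.ofReal ((σ ^ p)⁻¹) * ∑' Nk : (Fin s → ℕ) × (Fin s → ℕ),
          (ENNReal.ofReal (∏ j, ((Nk.1 j).choose (Nk.2 j) : ℝ) *
              κ j ^ (Nk.1 j - Nk.2 j) * (σ * lam j) ^ (Nk.2 j)) *
            (if 1 ≤ ∑ j, Nk.1 j then SupS G a Nk.1 else 0)) := by
        refine mul_le_mul' le_rfl ?_
        exact ENNReal.tsum_comp_le_tsum_of_injective hι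
          (fun Nk => ENNReal.ofReal (∏ j, ((Nk.1 j).choose (Nk.2 j) : ℝ) *
              κ j ^ (Nk.1 j - Nk.2 j) * (σ * lam j) ^ (Nk.2 j)) *
            (if 1 ≤ ∑ j, Nk.1 j then SupS G a Nk.1 else 0))
    _ = ENNReal.ofReal ((σ ^ p)⁻¹) * ∑' N : Fin s → ℕ, ∑' k : Fin s → ℕ,
          (ENNReal.ofReal (∏ j, ((N j).choose (k j) : ℝ) *
              κ j ^ (N j - k j) * (σ * lam j) ^ (k j)) *
            (if 1 ≤ ∑ j, N j then SupS G a N else 0)) := by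
        rw [ENNReal.tsum_prod']
    _ = ENNReal.ofReal ((σ ^ p)⁻¹) * ∑' N : Fin s → ℕ,
          (if 1 ≤ ∑ j, N j then
            ENNReal.ofReal (∏ j, (κ j + σ * lam j) ^ N j) * SupS G a N else 0) := by
        congr 1
        refine tsum_congr fun N => ?_
        rw [ENNReal.tsum_mul_right, tsum_choose N κ (fun j => σ * lam j)
          (fun j => (hκ j).le) (fun j => mul_nonneg hσ0.le (hlam j).le),
          mul_ite, mul_zero]
    _ ≤ ENNReal.ofReal ((σ ^ p)⁻¹) * coefNorm G (fun j => κ j + σ * lam j) a := by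
        refine mul_le_mul' le_rfl ?_
        rw [coefNorm_eq G _ hκσ0 a]
        exact le_add_self

end BFKT
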